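/- Suppose P = Pᵀ ≻ 0 solves P(L+Θ) + (L+Θ)ᵀP = Q for some Q = Qᵀ ≻ 0, where L + Θ is such that -(L+Θ) is Hurwitz. Let Φ, Σ, Δ be diagonal positive matrices and γ ∈ ℝⁿ, set x*(x₀) = (L+Θ)^{-1}Θx₀ and z = x - x*. Then along solutions of the masked Friedkin–Johnsen system ẋ = -(L+Θ)(I+Φe^{-Σt})(x + e^{-Δt}γ) + Θ(I+Φe^{-Σt})(x₀ + e^{-Δt}γ), the function V(z) = zᵀPz satisfies V̇ ≤ -α‖z‖² + β‖z‖e^{-δt} for some constants α, β, δ > 0; consequently z(t) → 0, i.e., x(t) → x*(x₀), uniformly in the initial time. -/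

import Mathlib

open Real Filter Matrix

set_option maxHeartbeats 4000000

lemma posDef_lower_bound {n : ℕ} {M : Matrix (Fin n) (Fin n) ℝ} (hM : M.PosDef) :
    ∃ c : ℝ, 0 < c ∧ ∀ v : Fin n → ℝ, c * ∑ i, v i ^ 2 ≤ v ⬝ᵥ M.mulVec v := by
  rcases Nat.eq_zero_or_pos n with h | h
  · subst h
    exact ⟨1, one_pos, fun v => by simp [dotProduct]⟩
  · haveI : Nonempty (Fin n) := ⟨⟨0, h⟩⟩
    have hH := hM.1
    set ev := hH.eigenvalues with hev
    set c := Finset.univ.inf' Finset.univ_nonempty ev with hc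
    refine ⟨c, ?_, ?_⟩
    · rw [hc, Finset.lt_inf'_iff]
      exact fun i _ => hM.eigenvalues_pos i
    · intro v
      set U : Matrix (Fin n) (Fin n) ℝ := (hH.eigenvectorUnitary : Matrix (Fin n) (Fin n) ℝ)
        with hUdef
      have hstar : star U = Uᵀ := by
        rw [Matrix.star_eq_conjTranspose, Matrix.conjTranspose_eq_transpose_of_trivial]
      set u : Fin n → ℝ := Uᵀ *ᵥ v with hu
      have h1 : v ⬝ᵥ M *ᵥ v = u ⬝ᵥ (Matrix.diagonal (RCLike.ofReal ∘ ev)) *ᵥ u := by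
        conv_lhs => rw [hH.spectral_theorem, Unitary.conjStarAlgAut_apply]
        rw [← hUdef, hstar, ← Matrix.mulVec_mulVec, ← Matrix.mulVec_mulVec,
          Matrix.dotProduct_mulVec v]
        congr 1
        rw [hu, Matrix.mulVec_transpose]
      have hUU : U * Uᵀ = 1 := by
        rw [← hstar]
        exact (Matrix.mem_unitaryGroup_iff).mp hH.eigenvectorUnitary.2
      have h3 : ∑ i, u i ^ 2 = ∑ i, v i ^ 2 := by
        have : u ⬝ᵥ u = v ⬝ᵥ v := by
          rw [hu]
          rw [Matrix.dotProduct_mulVec, ← Matrix.mulVec_transpose, Matrix.transpose_transpose,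
            Matrix.mulVec_mulVec, hUU, Matrix.one_mulVec]
        simpa [dotProduct, pow_two] using this
      rw [h1]
      have h2 : u ⬝ᵥ (Matrix.diagonal (RCLike.ofReal ∘ ev)) *ᵥ u = ∑ i, ev i * u i ^ 2 := by
        simp only [dotProduct, Matrix.mulVec_diagonal, Function.comp_apply,
          RCLike.ofReal_real_eq_id, id_eq]
        exact Finset.sum_congr rfl fun i _ => by ring
      rw [h2, ← h3, Finset.mul_sum]
      refine Finset.sum_le_sum fun i _ => ?_
      have hci : c ≤ ev i := Finset.inf'_le _ (Finset.mem_univ i)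
      nlinarith [sq_nonneg (u i)]

lemma dot_mulVec_le_of_bounds {n : ℕ} (M : Matrix (Fin n) (Fin n) ℝ) (v w : Fin n → ℝ)
    {a b : ℝ} (ha0 : 0 ≤ a) (hb0 : 0 ≤ b) (ha : ∀ i, |v i| ≤ a) (hb : ∀ j, |w j| ≤ b) :
    |v ⬝ᵥ M *ᵥ w| ≤ (∑ i, ∑ j, |M i j|) * a * b := by
  calc |v ⬝ᵥ M *ᵥ w| = |∑ i, v i * ∑ j, M i j * w j| := by simp [dotProduct, mulVec]
    _ ≤ ∑ i, |v i * ∑ j, M i j * w j| := Finset.abs_sum_le_sum_abs _ _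
    _ ≤ ∑ i, (∑ j, |M i j|) * a * b := by
        refine Finset.sum_le_sum fun i _ => ?_
        rw [abs_mul]
        calc |v i| * |∑ j, M i j * w j| ≤ a * ∑ j, |M i j| * b := by
              refine mul_le_mul (ha i) ?_ (abs_nonneg _) ha0
              refine le_trans (Finset.abs_sum_le_sum_abs _ _) (Finset.sum_le_sum fun j _ => ?_)
              rw [abs_mul]
              exact mul_le_mul_of_nonneg_left (hb j) (abs_nonneg _)
          _ = (∑ j, |M i j|) * a * b := by rw [← Finset.sum_mul]; ring
    _ = (∑ i, ∑ j, |M i j|) * a * b := by rw [← Finset.sum_mul, ← Finset.sum_mul]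

lemma hasDerivAt_quadForm {n : ℕ} (P : Matrix (Fin n) (Fin n) ℝ) {f : ℝ → Fin n → ℝ}
    {f' : Fin n → ℝ} {t : ℝ} (hf : ∀ i, HasDerivAt (fun s => f s i) (f' i) t) :
    HasDerivAt (fun s => f s ⬝ᵥ P *ᵥ f s) (f' ⬝ᵥ P *ᵥ f t + f t ⬝ᵥ P *ᵥ f') t := by
  have H : HasDerivAt (fun s => ∑ i, ∑ j, f s i * (P i j * f s j))
      (∑ i, ∑ j, (f' i * (P i j * f t j) + f t i * (P i j * f' j))) t :=
    HasDerivAt.fun_sum fun i _ => HasDerivAt.fun_sum fun j _ => ((hf i).mul ((hf j).const_mul _))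
  have h1 : (fun s => f s ⬝ᵥ P *ᵥ f s) = fun s => ∑ i, ∑ j, f s i * (P i j * f s j) := by
    funext s; simp [dotProduct, mulVec, Finset.mul_sum]
  rw [h1]
  convert H using 1
  simp [dotProduct, mulVec, Finset.mul_sum, Finset.sum_add_distrib]

lemma le_initial_of_deriv_nonpos {F F' : ℝ → ℝ} (hF : ∀ t, HasDerivAt F (F' t) t)
    (h : ∀ t, 0 < t → F' t ≤ 0) : ∀ t, 0 ≤ t → F t ≤ F 0 := by
  have hA : AntitoneOn F (Set.Ici 0) := by
    apply antitoneOn_of_deriv_nonpos (convex_Ici 0)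
    · exact fun t _ => (hF t).continuousAt.continuousWithinAt
    · exact fun t _ => ((hF t).differentiableAt).differentiableWithinAt
    · intro t ht
      rw [interior_Ici] at ht
      rw [(hF t).deriv]
      exact h t ht
  exact fun t ht => hA (Set.mem_Ici.2 le_rfl) (Set.mem_Ici.2 ht) ht

lemma symm_dot {n : ℕ} {P : Matrix (Fin n) (Fin n) ℝ} (hPsym : P.IsSymm)
    (v w : Fin n → ℝ) : v ⬝ᵥ P *ᵥ w = w ⬝ᵥ P *ᵥ v := by
  rw [Matrix.dotProduct_mulVec, ← Matrix.mulVec_transpose, hPsym.eq, dotProduct_comm]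

lemma factor_aux (m E V W a b : ℝ) (ha : a ≠ 0) :
    m * (-a * E) * (V + b / a) + m * W = m * (W - E * (a * V + b)) := by
  field_simp
  ring

lemma aux2 (a σ E : ℝ) (h : σ ≠ 0) : a / σ * (E * -σ) = -a * E := by
  field_simp

/-- Theorem 2 of the paper: along the masked continuous-time Friedkin–Johnsen system,
the quadratic Lyapunov function `V(z) = zᵀPz` (with `P` solving the Lyapunov equation)
satisfies `V̇ ≤ -α‖z‖² + β‖z‖e^{-δt}`, hence `x(t) → x*(x₀) = (L+Θ)⁻¹Θx₀`. -/
theorem stmt14 {n : ℕ} (L Θ P Q : Matrix (Fin n) (Fin n) ℝ)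
    (hP : P.PosDef) (hPsym : P.IsSymm) (hQ : Q.PosDef) (hQsym : Q.IsSymm)
    (hLyap : P * (L + Θ) + (L + Θ)ᵀ * P = Q)
    (hHurwitz : ∀ μ ∈ spectrum ℂ ((L + Θ).map (algebraMap ℝ ℂ)), 0 < μ.re)
    (Φ Sg Δ γ : Fin n → ℝ)
    (hΦ : ∀ i, 0 < Φ i) (hSg : ∀ i, 0 < Sg i) (hΔ : ∀ i, 0 < Δ i)
    (x₀ : Fin n → ℝ) (xstar : Fin n → ℝ)
    (hxstar : xstar = (L + Θ)⁻¹.mulVec (Θ.mulVec x₀)) :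
    ∃ α β δ : ℝ, 0 < α ∧ 0 < β ∧ 0 < δ ∧
      ∀ x : ℝ → Fin n → ℝ,
        (∀ t, HasDerivAt x
          (-(L + Θ).mulVec (fun i =>
              (1 + Φ i * Real.exp (-Sg i * t)) * (x t i + Real.exp (-Δ i * t) * γ i)) +
            Θ.mulVec (fun i =>
              (1 + Φ i * Real.exp (-Sg i * t)) * (x₀ i + Real.exp (-Δ i * t) * γ i))) t) →
        x 0 = x₀ →
        ((∀ t, 0 ≤ t →
          deriv (fun s => (fun i => x s i - xstar i) ⬝ᵥ P.mulVec fun i => x s i - xstar i) t ≤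
            -α * (∑ i, (x t i - xstar i) ^ 2) +
              β * Real.sqrt (∑ i, (x t i - xstar i) ^ 2) * Real.exp (-δ * t)) ∧
          Tendsto x atTop (nhds xstar)) := by
  rcases Nat.eq_zero_or_pos n with hn | hn
  · subst hn
    refine ⟨1, 1, 1, one_pos, one_pos, one_pos, fun x hx hx0 => ⟨fun t ht => ?_, ?_⟩⟩
    · have hV : (fun s => (fun i => x s i - xstar i) ⬝ᵥ P.mulVec fun i => x s i - xstar i)
          = fun _ => (0 : ℝ) := by
        funext s; simp [dotProduct]
      rw [hV, deriv_const]
      simp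
    · have hxx : x = fun _ => xstar := funext fun t => funext fun i => i.elim0
      rw [hxx]; exact tendsto_const_nhds
  · haveI : Nonempty (Fin n) := ⟨⟨0, hn⟩⟩
    set A := L + Θ with hA
    -- invertibility of A
    have hdet : IsUnit A.det := by
      rw [isUnit_iff_ne_zero]
      intro h0
      have h1 : (A.map (algebraMap ℝ ℂ)).det = 0 := by
        rw [show A.map ⇑(algebraMap ℝ ℂ) = (algebraMap ℝ ℂ).mapMatrix A from rfl,
          ← RingHom.map_det]; simp [h0]
      have h2 : ¬ IsUnit (A.map (algebraMap ℝ ℂ)) := by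
        rw [Matrix.isUnit_iff_isUnit_det, h1]; simp
      have h3 : (0 : ℂ) ∈ spectrum ℂ (A.map (algebraMap ℝ ℂ)) := (spectrum.zero_mem_iff (R := ℂ)).2 h2
      simpa using hHurwitz 0 h3
    have hAx : A *ᵥ xstar = Θ *ᵥ x₀ := by
      rw [hxstar, Matrix.mulVec_mulVec, Matrix.mul_nonsing_inv _ hdet, Matrix.one_mulVec]
    obtain ⟨lP, hlP, hPlow⟩ := posDef_lower_bound hP
    obtain ⟨lQ, hlQ, hQlow⟩ := posDef_lower_bound hQ
    set CP := ∑ i, ∑ j, |P i j| with hCPdef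
    have hCP : 0 < CP := by
      set e : Fin n → ℝ := Pi.single (⟨0, hn⟩ : Fin n) 1 with he
      have bnd : ∀ i, |e i| ≤ 1 := by
        intro i
        rcases eq_or_ne i ⟨0, hn⟩ with h | h <;> simp [he, Pi.single_apply, h]
      have h1 := hPlow e
      have hsum : ∑ i, e i ^ 2 = 1 := by
        simp [he, Pi.single_apply]
      have h2 := dot_mulVec_le_of_bounds P e e zero_le_one zero_le_one bnd bnd
      rw [hsum, mul_one] at h1
      have h3 := le_abs_self (e ⬝ᵥ P *ᵥ e)
      nlinarith
    -- constants
    set σ := Finset.univ.inf' Finset.univ_nonempty (fun j => min (Sg j) (Δ j)) with hσdef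
    have hσ : 0 < σ := by
      rw [hσdef, Finset.lt_inf'_iff]
      exact fun j _ => lt_min (hSg j) (hΔ j)
    have hσSg : ∀ j, σ ≤ Sg j := fun j =>
      le_trans (Finset.inf'_le _ (Finset.mem_univ j)) (min_le_left _ _)
    have hσΔ : ∀ j, σ ≤ Δ j := fun j =>
      le_trans (Finset.inf'_le _ (Finset.mem_univ j)) (min_le_right _ _)
    set D₁ := ∑ k, ∑ j, |A k j| * Φ j with hD₁def
    have hD₁ : 0 ≤ D₁ :=
      Finset.sum_nonneg fun k _ => Finset.sum_nonneg fun j _ =>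
        mul_nonneg (abs_nonneg _) (hΦ j).le
    set D₂ := ∑ k, ∑ j, (|A k j| * Φ j * |xstar j| + |Θ k j| * Φ j * |x₀ j|
        + (|Θ k j| + |A k j|) * (1 + Φ j) * |γ j|) with hD₂def
    have hD₂ : 0 ≤ D₂ := by
      refine Finset.sum_nonneg fun k _ => Finset.sum_nonneg fun j _ => ?_
      have := (hΦ j).le
      positivity
    set V0 := (fun i => x₀ i - xstar i) ⬝ᵥ P *ᵥ (fun i => x₀ i - xstar i) with hV0def
    have hV0 : 0 ≤ V0 := by
      have h1 := hPlow (fun i => x₀ i - xstar i)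
      have h2 : 0 ≤ ∑ i, (x₀ i - xstar i) ^ 2 := Finset.sum_nonneg fun i _ => sq_nonneg _
      nlinarith
    set a' := 2 * CP * (D₁ + D₂) / lP + 1 with ha'def
    have ha' : 0 < a' := add_pos_of_nonneg_of_pos
      (div_nonneg (mul_nonneg (mul_nonneg (by norm_num) hCP.le) (add_nonneg hD₁ hD₂)) hlP.le)
      one_pos
    set b := 2 * CP * D₂ with hbdef
    have hb : 0 ≤ b := mul_nonneg (mul_nonneg (by norm_num) hCP.le) hD₂
    set KV := Real.exp (a' / σ) * (V0 + b / a') with hKVdef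
    have hKV : 0 ≤ KV := mul_nonneg (Real.exp_pos _).le (add_nonneg hV0 (div_nonneg hb ha'.le))
    set Ksq := Real.sqrt (KV / lP) with hKsqdef
    have hKsq : 0 ≤ Ksq := Real.sqrt_nonneg _
    set β := 2 * CP * (D₁ * Ksq + D₂) + 1 with hβdef
    have hβ : 0 < β := lt_of_lt_of_le one_pos (le_add_of_nonneg_left
      (mul_nonneg (mul_nonneg (by norm_num) hCP.le) (add_nonneg (mul_nonneg hD₁ hKsq) hD₂)))
    set a₂ := lQ / CP with ha₂def
    have ha₂ : 0 < a₂ := div_pos hlQ hCP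
    set δ := min σ (a₂ / 2) with hδdef
    have hδ : 0 < δ := lt_min hσ (half_pos ha₂)
    have hδσ : δ ≤ σ := min_le_left _ _
    have hδa₂ : δ < a₂ := lt_of_le_of_lt (min_le_right _ _) (by linarith)
    refine ⟨lQ, β, δ, hlQ, hβ, hδ, ?_⟩
    intro x hode hx0
    set z : ℝ → Fin n → ℝ := fun s i => x s i - xstar i with hz
    set S : ℝ → ℝ := fun s => ∑ i, z s i ^ 2 with hS
    set Vf : ℝ → ℝ := fun s => z s ⬝ᵥ P *ᵥ z s with hVf
    set wf : ℝ → Fin n → ℝ := fun t =>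
      -(A *ᵥ fun i => (1 + Φ i * Real.exp (-Sg i * t)) * (x t i + Real.exp (-Δ i * t) * γ i)) +
        Θ *ᵥ fun i => (1 + Φ i * Real.exp (-Sg i * t)) * (x₀ i + Real.exp (-Δ i * t) * γ i)
      with hwf
    have hode' : ∀ t, HasDerivAt x (wf t) t := hode
    have hzd : ∀ t (i : Fin n), HasDerivAt (fun s => z s i) (wf t i) t := fun t i =>
      ((hasDerivAt_pi.mp (hode' t)) i).sub_const (xstar i)
    have hVd : ∀ t, HasDerivAt Vf (wf t ⬝ᵥ P *ᵥ z t + z t ⬝ᵥ P *ᵥ wf t) t := fun t =>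
      hasDerivAt_quadForm P (hzd t)
    have hderiv : ∀ t, deriv Vf t = wf t ⬝ᵥ P *ᵥ z t + z t ⬝ᵥ P *ᵥ wf t := fun t => (hVd t).deriv
    set u : ℝ → Fin n → ℝ := fun t i => wf t i + (A *ᵥ z t) i with hu
    have hSnonneg : ∀ t, 0 ≤ S t := fun t => Finset.sum_nonneg fun i _ => sq_nonneg _
    have hVpos : ∀ t, lP * S t ≤ Vf t := fun t => hPlow (z t)
    have hVnonneg : ∀ t, 0 ≤ Vf t := by
      intro t; nlinarith [hVpos t, mul_nonneg hlP.le (hSnonneg t)]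
    have habs : ∀ t i, |z t i| ≤ Real.sqrt (S t) := by
      intro t i
      rw [← Real.sqrt_sq_eq_abs]
      exact Real.sqrt_le_sqrt
        (Finset.single_le_sum (fun j _ => sq_nonneg (z t j)) (Finset.mem_univ i))
    have prod3 : ∀ a1 a2 a3 b1 b2 b3 : ℝ, 0 ≤ a1 → 0 ≤ a2 → 0 ≤ a3 →
        a1 ≤ b1 → a2 ≤ b2 → a3 ≤ b3 → a1 * a2 * a3 ≤ b1 * b2 * b3 := by
      intro a1 a2 a3 b1 b2 b3 ha1 ha2 ha3 h1 h2 h3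
      have hb1 : 0 ≤ b1 := le_trans ha1 h1
      have hb2 : 0 ≤ b2 := le_trans ha2 h2
      exact mul_le_mul (mul_le_mul h1 h2 ha2 hb1) h3 ha3 (mul_nonneg hb1 hb2)
    have hVle : ∀ t, Vf t ≤ CP * S t := by
      intro t
      have h2 : |z t ⬝ᵥ P *ᵥ z t| ≤ CP * Real.sqrt (S t) * Real.sqrt (S t) :=
        dot_mulVec_le_of_bounds P (z t) (z t) (Real.sqrt_nonneg (S t))
          (Real.sqrt_nonneg (S t)) (habs t) (habs t)
      have h3 : Real.sqrt (S t) * Real.sqrt (S t) = S t := Real.mul_self_sqrt (hSnonneg t)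
      have h4 : Vf t ≤ |z t ⬝ᵥ P *ᵥ z t| := le_abs_self _
      calc Vf t ≤ |z t ⬝ᵥ P *ᵥ z t| := h4
        _ ≤ CP * Real.sqrt (S t) * Real.sqrt (S t) := h2
        _ = CP * S t := by rw [mul_assoc, h3]
    -- the derivative identity
    have key1 : ∀ t, deriv Vf t = -(z t ⬝ᵥ Q *ᵥ z t) + 2 * (z t ⬝ᵥ P *ᵥ u t) := by
      intro t
      have hw : wf t = -(A *ᵥ z t) + u t := by
        funext i; simp [hu]
      have hQz : z t ⬝ᵥ Q *ᵥ z t = 2 * (z t ⬝ᵥ (P * A) *ᵥ z t) := by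
        have h1 : (P * A)ᵀ = Aᵀ * P := by rw [Matrix.transpose_mul, hPsym.eq]
        have htr : z t ⬝ᵥ (Aᵀ * P) *ᵥ z t = z t ⬝ᵥ (P * A) *ᵥ z t := by
          rw [← h1, Matrix.dotProduct_mulVec, Matrix.vecMul_transpose, dotProduct_comm]
        rw [← hLyap, Matrix.add_mulVec, dotProduct_add, htr]; ring
      rw [hderiv t, symm_dot hPsym (wf t) (z t), hw, Matrix.mulVec_add, dotProduct_add,
        Matrix.mulVec_neg, dotProduct_neg, Matrix.mulVec_mulVec]
      linarith [hQz]
    -- explicit formula for the perturbation u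
    have key2 : ∀ t k, u t k = ∑ j,
        (-(A k j * (Φ j * Real.exp (-Sg j * t)) * z t j)
          - A k j * (Φ j * Real.exp (-Sg j * t)) * xstar j
          + Θ k j * (Φ j * Real.exp (-Sg j * t)) * x₀ j
          + (Θ k j - A k j) * ((1 + Φ j * Real.exp (-Sg j * t)) * Real.exp (-Δ j * t)) * γ j) := by
      intro t k
      have hx : ∑ j, A k j * xstar j = ∑ j, Θ k j * x₀ j := by
        have h := congrFun hAx k
        simpa [Matrix.mulVec, dotProduct] using h
      show wf t k + (A *ᵥ z t) k = _
      simp only [hwf, hz, Pi.add_apply, Pi.neg_apply, Matrix.mulVec, dotProduct]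
      rw [← sub_eq_zero]
      simp only [← Finset.sum_neg_distrib, ← Finset.sum_add_distrib, ← Finset.sum_sub_distrib]
      rw [show (0:ℝ) = ∑ j, (Θ k j * x₀ j - A k j * xstar j) by
        rw [Finset.sum_sub_distrib, hx, sub_self]]
      exact Finset.sum_congr rfl fun j _ => by ring
    -- exponential bound on u
    have key3 : ∀ t, 0 ≤ t → ∀ k, |u t k| ≤
        Real.exp (-σ * t) * (D₁ * Real.sqrt (S t) + D₂) := by
      intro t ht k
      rw [key2 t k]
      have hrow1 : ∑ j, |A k j| * Φ j ≤ D₁ :=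
        Finset.single_le_sum (f := fun k => ∑ j, |A k j| * Φ j)
          (fun k _ => Finset.sum_nonneg fun j _ => mul_nonneg (abs_nonneg _) (hΦ j).le)
          (Finset.mem_univ k)
      have hrow2 : ∑ j, (|A k j| * Φ j * |xstar j| + |Θ k j| * Φ j * |x₀ j|
          + (|Θ k j| + |A k j|) * (1 + Φ j) * |γ j|) ≤ D₂ :=
        Finset.single_le_sum (f := fun k => ∑ j, (|A k j| * Φ j * |xstar j|
            + |Θ k j| * Φ j * |x₀ j| + (|Θ k j| + |A k j|) * (1 + Φ j) * |γ j|))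
          (fun k _ => Finset.sum_nonneg fun j _ => by
            have := (hΦ j).le; positivity)
          (Finset.mem_univ k)
      calc |∑ j, (-(A k j * (Φ j * Real.exp (-Sg j * t)) * z t j)
              - A k j * (Φ j * Real.exp (-Sg j * t)) * xstar j
              + Θ k j * (Φ j * Real.exp (-Sg j * t)) * x₀ j
              + (Θ k j - A k j) * ((1 + Φ j * Real.exp (-Sg j * t)) * Real.exp (-Δ j * t)) * γ j)|
          ≤ ∑ j, |(-(A k j * (Φ j * Real.exp (-Sg j * t)) * z t j)
              - A k j * (Φ j * Real.exp (-Sg j * t)) * xstar j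
              + Θ k j * (Φ j * Real.exp (-Sg j * t)) * x₀ j
              + (Θ k j - A k j) * ((1 + Φ j * Real.exp (-Sg j * t)) * Real.exp (-Δ j * t)) * γ j)| :=
            Finset.abs_sum_le_sum_abs _ _
        _ ≤ ∑ j, (|A k j| * (Φ j * Real.exp (-σ * t)) * Real.sqrt (S t)
              + |A k j| * (Φ j * Real.exp (-σ * t)) * |xstar j|
              + |Θ k j| * (Φ j * Real.exp (-σ * t)) * |x₀ j|
              + (|Θ k j| + |A k j|) * ((1 + Φ j) * Real.exp (-σ * t)) * |γ j|) := by
            refine Finset.sum_le_sum fun j _ => ?_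
            have hE : Real.exp (-Sg j * t) ≤ Real.exp (-σ * t) :=
              Real.exp_le_exp.2 (by nlinarith [mul_le_mul_of_nonneg_right (hσSg j) ht])
            have he : Real.exp (-Δ j * t) ≤ Real.exp (-σ * t) :=
              Real.exp_le_exp.2 (by nlinarith [mul_le_mul_of_nonneg_right (hσΔ j) ht])
            have hE1 : Real.exp (-Sg j * t) ≤ 1 := by
              rw [← Real.exp_zero]
              exact Real.exp_le_exp.2 (by nlinarith [mul_nonneg (hSg j).le ht])
            have hzj := habs t j
            have htri : |(-(A k j * (Φ j * Real.exp (-Sg j * t)) * z t j)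
                - A k j * (Φ j * Real.exp (-Sg j * t)) * xstar j
                + Θ k j * (Φ j * Real.exp (-Sg j * t)) * x₀ j
                + (Θ k j - A k j) * ((1 + Φ j * Real.exp (-Sg j * t)) * Real.exp (-Δ j * t)) * γ j)|
                ≤ |A k j * (Φ j * Real.exp (-Sg j * t)) * z t j|
                  + |A k j * (Φ j * Real.exp (-Sg j * t)) * xstar j|
                  + |Θ k j * (Φ j * Real.exp (-Sg j * t)) * x₀ j|
                  + |(Θ k j - A k j) * ((1 + Φ j * Real.exp (-Sg j * t)) * Real.exp (-Δ j * t)) * γ j| := by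
              refine (abs_add_le _ _).trans (add_le_add_left ((abs_add_le _ _).trans
                (add_le_add_left ((abs_sub _ _).trans (by rw [abs_neg])) _)) _)
            refine htri.trans ?_
            have b1 : |A k j * (Φ j * Real.exp (-Sg j * t)) * z t j| ≤
                |A k j| * (Φ j * Real.exp (-σ * t)) * Real.sqrt (S t) := by
              rw [abs_mul, abs_mul,
                abs_of_nonneg (mul_nonneg (hΦ j).le (Real.exp_pos _).le)]
              exact prod3 _ _ _ _ _ _ (abs_nonneg _)
                (mul_nonneg (hΦ j).le (Real.exp_pos _).le) (abs_nonneg _) le_rfl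
                (mul_le_mul_of_nonneg_left hE (hΦ j).le) hzj
            have b2 : |A k j * (Φ j * Real.exp (-Sg j * t)) * xstar j| ≤
                |A k j| * (Φ j * Real.exp (-σ * t)) * |xstar j| := by
              rw [abs_mul, abs_mul,
                abs_of_nonneg (mul_nonneg (hΦ j).le (Real.exp_pos _).le)]
              exact prod3 _ _ _ _ _ _ (abs_nonneg _)
                (mul_nonneg (hΦ j).le (Real.exp_pos _).le) (abs_nonneg _) le_rfl
                (mul_le_mul_of_nonneg_left hE (hΦ j).le) le_rfl
            have b3 : |Θ k j * (Φ j * Real.exp (-Sg j * t)) * x₀ j| ≤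
                |Θ k j| * (Φ j * Real.exp (-σ * t)) * |x₀ j| := by
              rw [abs_mul, abs_mul,
                abs_of_nonneg (mul_nonneg (hΦ j).le (Real.exp_pos _).le)]
              exact prod3 _ _ _ _ _ _ (abs_nonneg _)
                (mul_nonneg (hΦ j).le (Real.exp_pos _).le) (abs_nonneg _) le_rfl
                (mul_le_mul_of_nonneg_left hE (hΦ j).le) le_rfl
            have b4 : |(Θ k j - A k j) * ((1 + Φ j * Real.exp (-Sg j * t)) * Real.exp (-Δ j * t)) * γ j|
                ≤ (|Θ k j| + |A k j|) * ((1 + Φ j) * Real.exp (-σ * t)) * |γ j| := by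
              rw [abs_mul, abs_mul,
                abs_of_nonneg (mul_nonneg
                  (by nlinarith [(hΦ j).le, (Real.exp_pos (-Sg j * t)).le] :
                    (0:ℝ) ≤ 1 + Φ j * Real.exp (-Sg j * t)) (Real.exp_pos _).le)]
              refine prod3 _ _ _ _ _ _ (abs_nonneg _)
                (mul_nonneg (by nlinarith [(hΦ j).le, (Real.exp_pos (-Sg j * t)).le])
                  (Real.exp_pos _).le) (abs_nonneg _) (abs_sub _ _) ?_ le_rfl
              refine mul_le_mul (by nlinarith [(hΦ j).le, (Real.exp_pos (-Sg j * t)).le]) he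
                (Real.exp_pos _).le (by nlinarith [(hΦ j).le])
            linarith
        _ = Real.exp (-σ * t) * ((∑ j, |A k j| * Φ j) * Real.sqrt (S t)
              + ∑ j, (|A k j| * Φ j * |xstar j| + |Θ k j| * Φ j * |x₀ j|
                + (|Θ k j| + |A k j|) * (1 + Φ j) * |γ j|)) := by
            rw [mul_add, Finset.sum_mul, Finset.mul_sum, Finset.mul_sum]
            rw [← Finset.sum_add_distrib]
            exact Finset.sum_congr rfl fun j _ => by ring
        _ ≤ Real.exp (-σ * t) * (D₁ * Real.sqrt (S t) + D₂) := by
            gcongr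
    have key4 : ∀ t, 0 ≤ t → z t ⬝ᵥ P *ᵥ u t ≤
        CP * Real.sqrt (S t) * (Real.exp (-σ * t) * (D₁ * Real.sqrt (S t) + D₂)) := by
      intro t ht
      refine le_trans (le_abs_self _) ?_
      exact dot_mulVec_le_of_bounds P (z t) (u t) (Real.sqrt_nonneg _)
        (mul_nonneg (Real.exp_pos _).le
          (add_nonneg (mul_nonneg hD₁ (Real.sqrt_nonneg _)) hD₂))
        (habs t) (key3 t ht)
    have hQz_nonneg : ∀ t, 0 ≤ z t ⬝ᵥ Q *ᵥ z t := by
      intro t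
      have h1 : lQ * S t ≤ z t ⬝ᵥ Q *ᵥ z t := hQlow (z t)
      linarith [mul_nonneg hlQ.le (hSnonneg t)]
    -- stage A : a priori bound
    have hstageA : ∀ t, 0 ≤ t →
        wf t ⬝ᵥ P *ᵥ z t + z t ⬝ᵥ P *ᵥ wf t ≤ Real.exp (-σ * t) * (a' * Vf t + b) := by
      intro t ht
      rw [← hderiv t, key1 t]
      have h2 := key4 t ht
      have h3 := hQz_nonneg t
      have h4 : Real.sqrt (S t) ≤ 1 + S t := by
        nlinarith [Real.sq_sqrt (hSnonneg t), Real.sqrt_nonneg (S t),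
          sq_nonneg (Real.sqrt (S t) - 1)]
      have h5 : Real.sqrt (S t) * Real.sqrt (S t) = S t := Real.mul_self_sqrt (hSnonneg t)
      have h6 : lP * S t ≤ Vf t := hVpos t
      have hEs := (Real.exp_pos (-σ * t)).le
      have h7 : 2 * CP * (D₁ + D₂) * S t ≤ (a' - 1) * Vf t := by
        have ha1 : a' - 1 = 2 * CP * (D₁ + D₂) / lP := by rw [ha'def]; ring
        rw [ha1, div_mul_eq_mul_div, le_div_iff₀ hlP]
        linarith [mul_le_mul_of_nonneg_left h6
          (mul_nonneg (mul_nonneg (by norm_num : (0:ℝ) ≤ 2) hCP.le) (add_nonneg hD₁ hD₂))]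
      have hA1 : Real.exp (-σ * t) * (2 * CP * (D₁ + D₂) * S t) ≤
          Real.exp (-σ * t) * ((a' - 1) * Vf t) :=
        mul_le_mul_of_nonneg_left h7 hEs
      have hA2 : Real.exp (-σ * t) * (2 * CP * D₂ * Real.sqrt (S t)) ≤
          Real.exp (-σ * t) * (2 * CP * D₂ * (1 + S t)) :=
        mul_le_mul_of_nonneg_left (mul_le_mul_of_nonneg_left h4
          (mul_nonneg (mul_nonneg (by norm_num) hCP.le) hD₂)) hEs
      have hbe : Real.exp (-σ * t) * b = Real.exp (-σ * t) * (2 * CP * D₂) := by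
        rw [hbdef]
      have h5' : Real.exp (-σ * t) * (2 * CP * D₁) * (Real.sqrt (S t) * Real.sqrt (S t))
          = Real.exp (-σ * t) * (2 * CP * D₁) * S t := by rw [h5]
      linarith [mul_nonneg hEs (hVnonneg t), h2, h3, h5', hA1, hA2, hbe]
    -- integrating factor
    set μ : ℝ → ℝ := fun s => Real.exp (a' / σ * Real.exp (-σ * s)) with hμ
    have hμd : ∀ s, HasDerivAt μ (μ s * (-a' * Real.exp (-σ * s))) s := by
      intro s
      have h1 : HasDerivAt (fun r : ℝ => -σ * r) (-σ) s := by
        simpa using (hasDerivAt_id s).const_mul (-σ)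
      have h3 : HasDerivAt (fun r => a' / σ * Real.exp (-σ * r))
          (a' / σ * (Real.exp (-σ * s) * -σ)) s := (h1.exp).const_mul _
      have h4 := h3.exp
      rw [aux2 a' σ (Real.exp (-σ * s)) hσ.ne'] at h4
      exact h4
    have hμpos : ∀ s, 0 < μ s := fun s => Real.exp_pos _
    have hμ1 : ∀ s, 0 ≤ s → 1 ≤ μ s := by
      intro s hs
      rw [hμ, ← Real.exp_zero]
      exact Real.exp_le_exp.2 (mul_nonneg (div_nonneg ha'.le hσ.le) (Real.exp_pos _).le)
    have hFd : ∀ s, HasDerivAt (fun r => μ r * (Vf r + b / a'))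
        (μ s * (-a' * Real.exp (-σ * s)) * (Vf s + b / a')
          + μ s * (wf s ⬝ᵥ P *ᵥ z s + z s ⬝ᵥ P *ᵥ wf s)) s := fun s =>
      (hμd s).mul ((hVd s).add_const _)
    have hF0 : ∀ t, 0 ≤ t → μ t * (Vf t + b / a') ≤ μ 0 * (Vf 0 + b / a') := by
      refine le_initial_of_deriv_nonpos hFd ?_
      intro t ht
      have h1 := hstageA t ht.le
      rw [factor_aux (μ t) (Real.exp (-σ * t)) (Vf t)
        (wf t ⬝ᵥ P *ᵥ z t + z t ⬝ᵥ P *ᵥ wf t) a' b ha'.ne']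
      exact mul_nonpos_of_nonneg_of_nonpos (hμpos t).le (sub_nonpos.2 h1)
    have hVf0 : Vf 0 = V0 := by
      have hz0 : z 0 = fun i => x₀ i - xstar i := by
        funext i; rw [hz]; simp [hx0]
      show z 0 ⬝ᵥ P *ᵥ z 0 = V0
      rw [hz0, hV0def]
    have hVKV : ∀ t, 0 ≤ t → Vf t ≤ KV := by
      intro t ht
      have h1 := hF0 t ht
      have hμ0 : μ 0 = Real.exp (a' / σ) := by
        show Real.exp (a' / σ * Real.exp (-σ * 0)) = _
        norm_num
      rw [hμ0, hVf0] at h1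
      have h2 : Vf t + b / a' ≤ μ t * (Vf t + b / a') :=
        le_mul_of_one_le_left (add_nonneg (hVnonneg t) (div_nonneg hb ha'.le)) (hμ1 t ht)
      have h4 : 0 ≤ b / a' := div_nonneg hb ha'.le
      rw [hKVdef]
      linarith
    have hSK : ∀ t, 0 ≤ t → Real.sqrt (S t) ≤ Ksq := by
      intro t ht
      rw [hKsqdef]
      apply Real.sqrt_le_sqrt
      rw [le_div_iff₀ hlP]
      linarith [hVpos t, hVKV t ht]
    -- the final derivative estimate
    have keyF : ∀ t, 0 ≤ t →
        deriv Vf t ≤ -lQ * S t + β * Real.sqrt (S t) * Real.exp (-δ * t) := by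
      intro t ht
      rw [key1 t]
      have h2 := key4 t ht
      have hq : lQ * S t ≤ z t ⬝ᵥ Q *ᵥ z t := hQlow (z t)
      have hEδ : Real.exp (-σ * t) ≤ Real.exp (-δ * t) :=
        Real.exp_le_exp.2 (by nlinarith [mul_le_mul_of_nonneg_right hδσ ht])
      have hKs := hSK t ht
      have c1 : D₁ * Real.sqrt (S t) + D₂ ≤ D₁ * Ksq + D₂ :=
        add_le_add_left (mul_le_mul_of_nonneg_left hKs hD₁) _
      have c2 : Real.exp (-σ * t) * (D₁ * Real.sqrt (S t) + D₂) ≤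
          Real.exp (-δ * t) * (D₁ * Ksq + D₂) :=
        mul_le_mul hEδ c1
          (add_nonneg (mul_nonneg hD₁ (Real.sqrt_nonneg _)) hD₂) (Real.exp_pos _).le
      have c3 : CP * Real.sqrt (S t) * (Real.exp (-σ * t) * (D₁ * Real.sqrt (S t) + D₂)) ≤
          CP * Real.sqrt (S t) * (Real.exp (-δ * t) * (D₁ * Ksq + D₂)) :=
        mul_le_mul_of_nonneg_left c2 (mul_nonneg hCP.le (Real.sqrt_nonneg _))
      have c5 : (2 * CP * (D₁ * Ksq + D₂)) * Real.sqrt (S t) * Real.exp (-δ * t) ≤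
          β * Real.sqrt (S t) * Real.exp (-δ * t) := by
        have hbb : 2 * CP * (D₁ * Ksq + D₂) ≤ β := by rw [hβdef]; linarith
        exact mul_le_mul_of_nonneg_right (mul_le_mul_of_nonneg_right hbb
          (Real.sqrt_nonneg _)) (Real.exp_pos _).le
      linarith [h2, hq, c3, c5]
    constructor
    · intro t ht
      exact keyF t ht
    · -- convergence
      have hVC : ∀ t, 0 ≤ t → deriv Vf t ≤ -a₂ * Vf t + β * Ksq * Real.exp (-δ * t) := by
        intro t ht
        have h1 := keyF t ht
        have h3 : a₂ * Vf t ≤ lQ * S t := by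
          rw [ha₂def, div_mul_eq_mul_div, div_le_iff₀ hCP]
          linarith [mul_le_mul_of_nonneg_left (hVle t) hlQ.le]
        have h4 : β * Real.sqrt (S t) * Real.exp (-δ * t) ≤ β * Ksq * Real.exp (-δ * t) := by
          have h5 := hSK t ht
          have h6 := (Real.exp_pos (-δ * t)).le
          exact mul_le_mul_of_nonneg_right
            (mul_le_mul_of_nonneg_left h5 hβ.le) h6
        linarith
      set c₃ := β * Ksq / (a₂ - δ) with hc₃
      have hc₃0 : 0 ≤ c₃ := div_nonneg (mul_nonneg hβ.le hKsq) (by linarith)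
      set G := fun s => Real.exp (a₂ * s) * Vf s - c₃ * Real.exp ((a₂ - δ) * s) with hG
      have hGd : ∀ s, HasDerivAt G (Real.exp (a₂ * s) * a₂ * Vf s
          + Real.exp (a₂ * s) * (wf s ⬝ᵥ P *ᵥ z s + z s ⬝ᵥ P *ᵥ wf s)
          - c₃ * (Real.exp ((a₂ - δ) * s) * (a₂ - δ))) s := by
        intro s
        have h1 : HasDerivAt (fun r : ℝ => Real.exp (a₂ * r)) (Real.exp (a₂ * s) * a₂) s := by
          exact ((by simpa using (hasDerivAt_id s).const_mul a₂ :
            HasDerivAt (fun r : ℝ => a₂ * r) a₂ s)).exp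
        have h2 : HasDerivAt (fun r : ℝ => Real.exp ((a₂ - δ) * r))
            (Real.exp ((a₂ - δ) * s) * (a₂ - δ)) s := by
          exact ((by simpa using (hasDerivAt_id s).const_mul (a₂ - δ) :
            HasDerivAt (fun r : ℝ => (a₂ - δ) * r) (a₂ - δ) s)).exp
        exact (h1.mul (hVd s)).sub (h2.const_mul c₃)
      have hG0 : ∀ t, 0 ≤ t → G t ≤ G 0 := by
        refine le_initial_of_deriv_nonpos hGd ?_
        intro t ht
        have h1 := hVC t ht.le
        rw [← hderiv t]
        have hcc : c₃ * (a₂ - δ) = β * Ksq := by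
          rw [hc₃]
          exact div_mul_cancel₀ _ (sub_pos.mpr hδa₂).ne'
        have hE : Real.exp (a₂ * t) * Real.exp (-δ * t) = Real.exp ((a₂ - δ) * t) := by
          rw [← Real.exp_add]; congr 1; ring
        have hE' : β * Ksq * (Real.exp (a₂ * t) * Real.exp (-δ * t))
            = β * Ksq * Real.exp ((a₂ - δ) * t) := by rw [hE]
        have hcc' : c₃ * (a₂ - δ) * Real.exp ((a₂ - δ) * t)
            = β * Ksq * Real.exp ((a₂ - δ) * t) := by rw [hcc]
        have hmt := mul_le_mul_of_nonneg_left h1 (Real.exp_pos (a₂ * t)).le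
        linarith [hmt, hE', hcc']
      have hVbound : ∀ t, 0 ≤ t →
          Vf t ≤ V0 * Real.exp (-(a₂ * t)) + c₃ * Real.exp (-(δ * t)) := by
        intro t ht
        have h1 := hG0 t ht
        have hG0v : G 0 = V0 - c₃ := by
          rw [hG]; simp [hVf0]
        have h1' : Real.exp (a₂ * t) * Vf t - c₃ * Real.exp ((a₂ - δ) * t) ≤ V0 - c₃ := by
          rw [hG0v] at h1; exact h1
        have h2 : Real.exp (a₂ * t) * Vf t ≤ V0 - c₃ + c₃ * Real.exp ((a₂ - δ) * t) := by
          linarith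
        have h3 := mul_le_mul_of_nonneg_left h2 (Real.exp_pos (-(a₂ * t))).le
        have e1 : Real.exp (-(a₂ * t)) * Real.exp (a₂ * t) = 1 := by
          rw [← Real.exp_add]; simp
        have e1' : Real.exp (-(a₂ * t)) * (Real.exp (a₂ * t) * Vf t) = Vf t := by
          rw [← mul_assoc, e1, one_mul]
        have e2 : Real.exp (-(a₂ * t)) * Real.exp ((a₂ - δ) * t) = Real.exp (-(δ * t)) := by
          rw [← Real.exp_add]; congr 1; ring
        have e2' : c₃ * (Real.exp (-(a₂ * t)) * Real.exp ((a₂ - δ) * t))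
            = c₃ * Real.exp (-(δ * t)) := by rw [e2]
        have e3 : 0 ≤ c₃ * Real.exp (-(a₂ * t)) :=
          mul_nonneg hc₃0 (Real.exp_pos _).le
        linarith [h3, e1', e2', e3]
      have hBt : Tendsto (fun t => V0 * Real.exp (-(a₂ * t)) + c₃ * Real.exp (-(δ * t)))
          atTop (nhds 0) := by
        have h1 : Tendsto (fun t : ℝ => a₂ * t) atTop atTop :=
          Tendsto.const_mul_atTop ha₂ tendsto_id
        have h2 : Tendsto (fun t : ℝ => δ * t) atTop atTop :=
          Tendsto.const_mul_atTop hδ tendsto_id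
        have h3 := Real.tendsto_exp_neg_atTop_nhds_zero.comp h1
        have h4 := Real.tendsto_exp_neg_atTop_nhds_zero.comp h2
        have h5 := (h3.const_mul V0).add (h4.const_mul c₃)
        simpa using h5
      have hVt : Tendsto Vf atTop (nhds 0) := by
        refine tendsto_of_tendsto_of_tendsto_of_le_of_le' tendsto_const_nhds hBt ?_ ?_
        · exact Eventually.of_forall fun t => hVnonneg t
        · filter_upwards [eventually_ge_atTop (0:ℝ)] with t ht using hVbound t ht
      rw [tendsto_pi_nhds]
      intro i
      have hsq : Tendsto (fun t => Real.sqrt (Vf t / lP)) atTop (nhds 0) := by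
        have h1 : Tendsto (fun t => Vf t / lP) atTop (nhds 0) := by
          simpa using hVt.div_const lP
        have h2 := (Real.continuous_sqrt.tendsto 0).comp h1
        simpa [Function.comp_def] using h2
      have hup : ∀ t, 0 ≤ t → |x t i - xstar i| ≤ Real.sqrt (Vf t / lP) := by
        intro t ht
        rw [← Real.sqrt_sq_eq_abs]
        apply Real.sqrt_le_sqrt
        rw [le_div_iff₀ hlP]
        have h1 : (x t i - xstar i) ^ 2 ≤ S t :=
          Finset.single_le_sum (fun j _ => sq_nonneg (z t j)) (Finset.mem_univ i)
        linarith [hVpos t, mul_le_mul_of_nonneg_right h1 hlP.le]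
      have hneg : Tendsto (fun t => -Real.sqrt (Vf t / lP)) atTop (nhds 0) := by
        simpa using hsq.neg
      have hd : Tendsto (fun t => x t i - xstar i) atTop (nhds 0) := by
        refine tendsto_of_tendsto_of_tendsto_of_le_of_le' hneg hsq ?_ ?_
        · filter_upwards [eventually_ge_atTop (0:ℝ)] with t ht using
            (abs_le.1 (hup t ht)).1
        · filter_upwards [eventually_ge_atTop (0:ℝ)] with t ht using
            (abs_le.1 (hup t ht)).2
      have hfin := hd.add_const (xstar i)
      simpa using hfin
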